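/- The ordinary generating function over n ≥ 1 and subsets T ⊆ [n] of the vertex set of the n-cycle, weighting by x^n y^{|T|} z^{runs(T)} where runs(T) is the number of connected components of the induced subgraph of the n-cycle on T (with runs(∅) = runs([n]) = 0), equals (2x²yz + xy(1-x) + x(1-xy)) / ((1-xy)(1-x) - x²yz) as a formal power series. -/

import Mathlib

open scoped Classical

/-- The number of "runs" of a subset `T` of the vertices of the `(n+1)`-cycle: the
number of connected components of the induced subgraph, computed as the number of
vertices of `T` whose cyclic successor is not in `T`. This gives
`runs(∅) = runs([n+1]) = 0`. -/
def runsCount (n : ℕ) (T : Finset (Fin (n+1))) : ℕ :=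
  (T.filter (fun i => i + 1 ∉ T)).card

/-- The generating function `R(x,y,z) = Σ_{n≥1} Σ_{T ⊆ [n]} xⁿ y^{|T|} z^{runs(T)}`,
as a formal power series in three variables `x = X 0`, `y = X 1`, `z = X 2`. -/
noncomputable def runsGF : MvPowerSeries (Fin 3) ℚ := fun e =>
  if 1 ≤ e 0 then
    ((Finset.univ.filter (fun T : Finset (Fin (e 0 - 1 + 1)) =>
        T.card = e 1 ∧ runsCount (e 0 - 1) T = e 2)).card : ℚ)
  else 0

def runsL (n : ℕ) (T : Finset (Fin (n+1))) : ℕ :=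
  (T.filter (fun i => i = Fin.last n ∨ i + 1 ∉ T)).card

lemma castSuccEmb_apply (n : ℕ) (j : Fin (n+1)) : Fin.castSuccEmb j = Fin.castSucc j := rfl

lemma castSucc_add_one (n : ℕ) (j : Fin (n+1)) : (Fin.castSucc j) + 1 = Fin.succ j := by
  apply Fin.ext
  simp [Fin.val_add, Nat.mod_eq_of_lt, Nat.lt_succ_iff, Fin.is_le]

lemma castSucc_succ_eq (n : ℕ) (j : Fin (n+1)) (h : j ≠ Fin.last n) :
    Fin.castSucc (j + 1) = Fin.succ j := by
  apply Fin.ext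
  have : (j:ℕ) < n := by
    rcases Fin.exists_castSucc_eq.mpr h with ⟨y, rfl⟩
    simpa using y.isLt
  simp [Fin.val_add, Nat.mod_eq_of_lt]
  omega

lemma mem_map_castSucc (n : ℕ) (S : Finset (Fin (n+1))) (j : Fin (n+1)) :
    Fin.castSucc j ∈ S.map Fin.castSuccEmb ↔ j ∈ S := Finset.mem_map' _

lemma succ_mem_map (n : ℕ) (S : Finset (Fin (n+1))) (j : Fin (n+1)) :
    Fin.succ j ∈ S.map Fin.castSuccEmb ↔ (j ≠ Fin.last n ∧ j + 1 ∈ S) := by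
  constructor
  · rintro hm
    rcases Finset.mem_map.mp hm with ⟨i, hi, hij⟩
    have hij' : Fin.castSucc i = Fin.succ j := hij
    have hj : j ≠ Fin.last n := by
      rintro rfl
      rw [Fin.succ_last] at hij'
      exact (Fin.castSucc_lt_last i).ne hij'
    refine ⟨hj, ?_⟩
    have : Fin.castSucc (j+1) = Fin.castSucc i := by rw [castSucc_succ_eq n j hj, hij']
    have : j + 1 = i := Fin.castSucc_injective _ this
    rwa [this]
  · rintro ⟨hj, hm⟩
    rw [← castSucc_succ_eq n j hj]
    exact (mem_map_castSucc n S (j+1)).mpr hm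

lemma last_not_mem_map (n : ℕ) (S : Finset (Fin (n+1))) :
    Fin.last (n+1) ∉ S.map Fin.castSuccEmb := by
  intro h
  rcases Finset.mem_map.mp h with ⟨i, _, hij⟩
  exact (Fin.castSucc_lt_last i).ne hij

lemma zero_mem_map (n : ℕ) (S : Finset (Fin (n+1))) :
    (0 : Fin (n+2)) ∈ S.map Fin.castSuccEmb ↔ (0 : Fin (n+1)) ∈ S := by
  rw [← Fin.castSucc_zero]; exact mem_map_castSucc n S 0

/-- cyclic runs vs linear runs -/
lemma runsL_eq_runsCount (n : ℕ) (T : Finset (Fin (n+1))) :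
    runsL n T = runsCount n T + (if Fin.last n ∈ T ∧ (0:Fin (n+1)) ∈ T then 1 else 0) := by
  unfold runsL runsCount
  by_cases hl : Fin.last n ∈ T
  · rw [Finset.card_filter, Finset.card_filter]
    rw [← Finset.add_sum_erase _ _ hl, ← Finset.add_sum_erase _ _ hl]
    have hsum : ∀ i ∈ T.erase (Fin.last n),
        (if i = Fin.last n ∨ i + 1 ∉ T then (1:ℕ) else 0) = (if i + 1 ∉ T then (1:ℕ) else 0) := by
      intro i hi
      have : i ≠ Fin.last n := Finset.ne_of_mem_erase hi
      simp [this]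
    rw [Finset.sum_congr rfl hsum]
    have h1 : (if Fin.last n = Fin.last n ∨ Fin.last n + 1 ∉ T then (1:ℕ) else 0) = 1 := by simp
    have h2 : (if Fin.last n + 1 ∉ T then (1:ℕ) else 0)
        = (if (0:Fin (n+1)) ∉ T then 1 else 0) := by rw [Fin.last_add_one]
    rw [h1, h2]
    by_cases h0 : (0:Fin (n+1)) ∈ T <;> simp [h0, hl] <;> omega
  · have : T.filter (fun i => i = Fin.last n ∨ i + 1 ∉ T) = T.filter (fun i => i + 1 ∉ T) := by
      apply Finset.filter_congr
      intro i hi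
      have : i ≠ Fin.last n := fun h => hl (h ▸ hi)
      simp [this]
    simp [this, hl]

/-- number of non-final block-ends -/
lemma filter_ne_last_card (n : ℕ) (S : Finset (Fin (n+1))) :
    (S.filter (fun j => j ≠ Fin.last n ∧ j + 1 ∉ S)).card
      + (if Fin.last n ∈ S then 1 else 0) = runsL n S := by
  unfold runsL
  by_cases hl : Fin.last n ∈ S
  · have hset : S.filter (fun i => i = Fin.last n ∨ i + 1 ∉ S)
        = insert (Fin.last n) (S.filter (fun j => j ≠ Fin.last n ∧ j + 1 ∉ S)) := by
      ext i
      simp only [Finset.mem_filter, Finset.mem_insert]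
      by_cases hi : i = Fin.last n
      · subst hi; simp [hl]
      · simp [hi]
    rw [hset, Finset.card_insert_of_notMem (by simp)]
    simp [hl]
  · have hset : S.filter (fun i => i = Fin.last n ∨ i + 1 ∉ S)
        = S.filter (fun j => j ≠ Fin.last n ∧ j + 1 ∉ S) := by
      apply Finset.filter_congr
      intro i hi
      have : i ≠ Fin.last n := fun h => hl (h ▸ hi)
      simp [this]
    simp [hset, hl]

lemma runsL_map (n : ℕ) (S : Finset (Fin (n+1))) :
    runsL (n+1) (S.map Fin.castSuccEmb) = runsL n S := by
  unfold runsL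
  rw [Finset.filter_map, Finset.card_map]
  congr 1
  apply Finset.filter_congr
  intro j hj
  simp only [Function.comp_apply, castSuccEmb_apply, castSucc_add_one]
  constructor
  · rintro (h | h)
    · exact absurd h (Fin.castSucc_lt_last j).ne
    · rw [succ_mem_map] at h
      by_cases hjl : j = Fin.last n
      · exact Or.inl hjl
      · exact Or.inr (fun hm => h ⟨hjl, hm⟩)
  · rintro (h | h)
    · subst h
      refine Or.inr (fun hm => ?_)
      exact ((succ_mem_map n S _).mp hm).1 rfl
    · exact Or.inr (fun hm => h ((succ_mem_map n S j).mp hm).2)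

lemma runsL_insert_last (n : ℕ) (S : Finset (Fin (n+1))) :
    runsL (n+1) (insert (Fin.last (n+1)) (S.map Fin.castSuccEmb))
      = runsL n S + (if Fin.last n ∈ S then 0 else 1) := by
  set L := Fin.last (n+1)
  set M := S.map Fin.castSuccEmb with hM
  have hLM : L ∉ M := last_not_mem_map n S
  unfold runsL
  rw [Finset.filter_insert]
  rw [if_pos (Or.inl rfl)]
  rw [Finset.card_insert_of_notMem (fun h => hLM (Finset.mem_of_mem_filter _ h))]
  have hM' : M.filter (fun i => i = L ∨ i + 1 ∉ insert L M)
      = (S.filter (fun j => j ≠ Fin.last n ∧ j + 1 ∉ S)).map Fin.castSuccEmb := by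
    rw [hM, Finset.filter_map]
    congr 1
    apply Finset.filter_congr
    intro j hj
    simp only [Function.comp_apply, castSuccEmb_apply, castSucc_add_one]
    have hne : Fin.castSucc j ≠ L := (Fin.castSucc_lt_last j).ne
    constructor
    · rintro (h | h)
      · exact absurd h hne
      · constructor
        · rintro rfl
          exact h (by rw [Fin.succ_last]; exact Finset.mem_insert_self _ _)
        · intro hm
          by_cases hjl : j = Fin.last n
          · exact h (by rw [hjl, Fin.succ_last]; exact Finset.mem_insert_self _ _)
          · exact h (Finset.mem_insert_of_mem ((succ_mem_map n S j).mpr ⟨hjl, hm⟩))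
    · rintro ⟨hjl, hm⟩
      refine Or.inr (fun h => ?_)
      rcases Finset.mem_insert.mp h with h | h
      · have : Fin.succ j = Fin.succ (Fin.last n) := by rw [h, Fin.succ_last]
        exact hjl (Fin.succ_injective _ this)
      · exact hm ((succ_mem_map n S j).mp h).2
  rw [hM', Finset.card_map]
  have := filter_ne_last_card n S
  unfold runsL at this
  by_cases hl : Fin.last n ∈ S <;> simp [hl] at this ⊢ <;> omega

noncomputable def pcnt (b0 bl : Bool) (n k r : ℕ) : ℕ :=
  (Finset.univ.filter (fun T : Finset (Fin (n+1)) =>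
     (((0:Fin (n+1)) ∈ T) ↔ b0 = true) ∧ ((Fin.last n ∈ T) ↔ bl = true) ∧
     T.card = k ∧ runsL n T = r)).card

lemma fin1_subsets (T : Finset (Fin 1)) : T = ∅ ∨ T = {0} := by
  by_cases h : (0 : Fin 1) ∈ T
  · right; ext i
    have : i = 0 := Subsingleton.elim _ _
    simp [this, h]
  · left; ext i
    have : i = 0 := Subsingleton.elim _ _
    simp [this, h]

lemma runsL_empty (n : ℕ) : runsL n ∅ = 0 := by simp [runsL]

lemma runsL_fin1_single : runsL 0 ({0} : Finset (Fin 1)) = 1 := by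
  unfold runsL
  rw [Finset.filter_singleton, if_pos]
  · simp
  · left; rfl

lemma univ_fin1 : (Finset.univ : Finset (Finset (Fin 1))) = {∅, {0}} := by
  ext T
  simp only [Finset.mem_univ, true_iff, Finset.mem_insert, Finset.mem_singleton]
  exact fin1_subsets T

lemma pcnt_zero (b0 bl : Bool) (k r : ℕ) :
    pcnt b0 bl 0 k r =
      if (b0 = bl) ∧ ((b0 = true ∧ k = 1 ∧ r = 1) ∨ (b0 = false ∧ k = 0 ∧ r = 0))
      then 1 else 0 := by
  unfold pcnt
  rw [univ_fin1]
  rw [show ({∅, {0}} : Finset (Finset (Fin 1))) = insert ∅ {{0}} from rfl]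
  rw [Finset.filter_insert, Finset.filter_singleton]
  have h1 : Fin.last 0 = (0 : Fin 1) := rfl
  cases b0 <;> cases bl <;>
    simp [h1, runsL_empty, runsL_fin1_single] <;>
    by_cases hk : k = 0 <;> by_cases hr : r = 0 <;>
    by_cases hk1 : k = 1 <;> by_cases hr1 : r = 1 <;>
    simp_all <;> omega

lemma pcnt_true_card_zero (b0 : Bool) (n r : ℕ) : pcnt b0 true n 0 r = 0 := by
  unfold pcnt
  rw [Finset.card_eq_zero, Finset.filter_eq_empty_iff]
  rintro T - ⟨h0, hl, hk, hr⟩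
  rw [Finset.card_eq_zero] at hk
  subst hk
  simp at hl

lemma pcnt_true_runs_zero (b0 : Bool) (n k : ℕ) : pcnt b0 true n k 0 = 0 := by
  unfold pcnt
  rw [Finset.card_eq_zero, Finset.filter_eq_empty_iff]
  rintro T - ⟨h0, hl, hk, hr⟩
  have hmem : Fin.last n ∈ T.filter (fun i => i = Fin.last n ∨ i + 1 ∉ T) := by
    rw [Finset.mem_filter]
    exact ⟨hl.mpr rfl, Or.inl rfl⟩
  have : 0 < runsL n T := Finset.card_pos.mpr ⟨_, hmem⟩
  omega


lemma card_filter_split {α : Type*} [Fintype α] (p q : α → Prop) [DecidablePred p]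
    [DecidablePred (fun a => p a ∧ q a)] [DecidablePred (fun a => p a ∧ ¬ q a)] :
    (Finset.univ.filter p).card =
      (Finset.univ.filter (fun a => p a ∧ q a)).card +
      (Finset.univ.filter (fun a => p a ∧ ¬ q a)).card := by
  rw [← Finset.card_union_of_disjoint]
  · congr 1
    ext a
    simp only [Finset.mem_filter, Finset.mem_union]
    tauto
  · rw [Finset.disjoint_left]
    intro a ha hb
    rw [Finset.mem_filter] at ha hb
    tauto


lemma zero_ne_last (n : ℕ) : (0 : Fin (n+2)) ≠ Fin.last (n+1) := by
  intro h
  have := congrArg Fin.val h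
  simp [Fin.val_last] at this

lemma preimage_map_eq (n : ℕ) (T : Finset (Fin (n+2))) (hl : Fin.last (n+1) ∉ T) :
    (Finset.univ.filter (fun j : Fin (n+1) => Fin.castSucc j ∈ T)).map Fin.castSuccEmb = T := by
  ext i
  simp only [Finset.mem_map, Finset.mem_filter, Finset.mem_univ, true_and]
  constructor
  · rintro ⟨j, hj, rfl⟩; exact hj
  · intro hi
    have hne : i ≠ Fin.last (n+1) := by rintro rfl; exact hl hi
    rcases Fin.exists_castSucc_eq.mpr hne with ⟨j, rfl⟩
    exact ⟨j, hi, rfl⟩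

lemma preimage_insert_eq (n : ℕ) (T : Finset (Fin (n+2))) (hl : Fin.last (n+1) ∈ T) :
    insert (Fin.last (n+1))
      ((Finset.univ.filter (fun j : Fin (n+1) => Fin.castSucc j ∈ T)).map Fin.castSuccEmb) = T := by
  ext i
  simp only [Finset.mem_insert, Finset.mem_map, Finset.mem_filter, Finset.mem_univ, true_and]
  constructor
  · rintro (rfl | ⟨j, hj, rfl⟩)
    · exact hl
    · exact hj
  · intro hi
    by_cases hne : i = Fin.last (n+1)
    · exact Or.inl hne
    · rcases Fin.exists_castSucc_eq.mpr hne with ⟨j, rfl⟩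
      exact Or.inr ⟨j, hi, rfl⟩

lemma bij_false (b0 bl : Bool) (n k r : ℕ) :
    (Finset.univ.filter (fun T : Finset (Fin (n+2)) =>
      (((0:Fin (n+2)) ∈ T) ↔ b0 = true) ∧ ((Fin.last (n+1) ∈ T) ↔ False) ∧
      ((Fin.castSucc (Fin.last n) ∈ T) ↔ bl = true) ∧
      T.card = k ∧ runsL (n+1) T = r)).card = pcnt b0 bl n k r := by
  unfold pcnt
  symm
  apply Finset.card_bij (fun S _ => S.map Fin.castSuccEmb)
  · rintro S hS
    rw [Finset.mem_filter] at hS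
    obtain ⟨-, h0, hl, hk, hr⟩ := hS
    rw [Finset.mem_filter]
    exact ⟨Finset.mem_univ _, by rw [zero_mem_map]; exact h0,
      iff_false_intro (last_not_mem_map n S),
      by rw [mem_map_castSucc]; exact hl,
      by rw [Finset.card_map]; exact hk,
      by rw [runsL_map]; exact hr⟩
  · intro S1 h1 S2 h2 heq
    exact Finset.map_injective _ heq
  · rintro T hT
    rw [Finset.mem_filter] at hT
    obtain ⟨-, h0, hl, hbl, hk, hr⟩ := hT
    have hlT : Fin.last (n+1) ∉ T := fun h => hl.mp h
    have hST := preimage_map_eq n T hlT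
    refine ⟨_, ?_, hST⟩
    rw [Finset.mem_filter]
    refine ⟨Finset.mem_univ _, ?_, ?_, ?_, ?_⟩
    · rw [← zero_mem_map n _, hST]; exact h0
    · rw [← mem_map_castSucc n _ (Fin.last n), hST]; exact hbl
    · rw [← Finset.card_map (f := Fin.castSuccEmb), hST]; exact hk
    · rw [← runsL_map n _, hST]; exact hr

lemma bij_true (b0 bl : Bool) (n k r : ℕ) :
    (Finset.univ.filter (fun T : Finset (Fin (n+2)) =>
      (((0:Fin (n+2)) ∈ T) ↔ b0 = true) ∧ ((Fin.last (n+1) ∈ T) ↔ True) ∧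
      ((Fin.castSucc (Fin.last n) ∈ T) ↔ bl = true) ∧
      T.card = k + 1 ∧ runsL (n+1) T = r + (if bl = true then 0 else 1))).card
      = pcnt b0 bl n k r := by
  unfold pcnt
  symm
  apply Finset.card_bij (fun S _ => insert (Fin.last (n+1)) (S.map Fin.castSuccEmb))
  · rintro S hS
    rw [Finset.mem_filter] at hS
    obtain ⟨-, h0, hl, hk, hr⟩ := hS
    rw [Finset.mem_filter]
    refine ⟨Finset.mem_univ _, ?_, iff_of_true (Finset.mem_insert_self _ _) trivial, ?_, ?_, ?_⟩
    · rw [Finset.mem_insert]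
      constructor
      · rintro (h | h)
        · exact absurd h.symm (zero_ne_last n).symm
        · exact h0.mp ((zero_mem_map n S).mp h)
      · intro hb
        exact Or.inr ((zero_mem_map n S).mpr (h0.mpr hb))
    · rw [Finset.mem_insert]
      constructor
      · rintro (h | h)
        · exact absurd h (Fin.castSucc_lt_last _).ne
        · exact hl.mp ((mem_map_castSucc n S _).mp h)
      · intro hb
        exact Or.inr ((mem_map_castSucc n S _).mpr (hl.mpr hb))
    · rw [Finset.card_insert_of_notMem (last_not_mem_map n S), Finset.card_map, hk]
    · rw [runsL_insert_last n S, hr]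
      cases bl
      · simp only [Bool.false_eq_true, iff_false] at hl
        simp [hl]
      · simp only [iff_true] at hl
        simp [hl]
  · intro S1 h1 S2 h2 heq
    have e1 : (S1.map Fin.castSuccEmb) = (S2.map Fin.castSuccEmb) := by
      rw [← Finset.erase_insert (last_not_mem_map n S1),
        ← Finset.erase_insert (last_not_mem_map n S2), heq]
    exact Finset.map_injective _ e1
  · rintro T hT
    rw [Finset.mem_filter] at hT
    obtain ⟨-, h0, hl, hbl, hk, hr⟩ := hT
    have hlT : Fin.last (n+1) ∈ T := hl.mpr trivial
    have hST := preimage_insert_eq n T hlT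
    set S := Finset.univ.filter (fun j : Fin (n+1) => Fin.castSucc j ∈ T) with hSdef
    refine ⟨S, ?_, hST⟩
    have hmem0 : ((0:Fin (n+1)) ∈ S) ↔ (b0 = true) := by
      rw [hSdef, Finset.mem_filter]
      simp only [Finset.mem_univ, true_and, Fin.castSucc_zero]
      exact h0
    have hmeml : (Fin.last n ∈ S) ↔ (bl = true) := by
      rw [hSdef, Finset.mem_filter]
      simp only [Finset.mem_univ, true_and]
      exact hbl
    have hcard : S.card + 1 = k + 1 := by
      rw [← hk, ← hST, Finset.card_insert_of_notMem (last_not_mem_map n S), Finset.card_map]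
    have hruns := runsL_insert_last n S
    rw [hST, hr] at hruns
    rw [Finset.mem_filter]
    refine ⟨Finset.mem_univ _, hmem0, hmeml, by omega, ?_⟩
    cases bl
    · simp only [Bool.false_eq_true, iff_false] at hmeml
      simp [hmeml] at hruns
      omega
    · simp only [iff_true] at hmeml
      simp [hmeml] at hruns
      omega

lemma pcnt_succ_false (b0 : Bool) (n k r : ℕ) :
    pcnt b0 false (n+1) k r = pcnt b0 true n k r + pcnt b0 false n k r := by
  have hsplit := card_filter_split
      (fun T : Finset (Fin (n+2)) =>
        (((0:Fin (n+2)) ∈ T) ↔ b0 = true) ∧ ((Fin.last (n+1) ∈ T) ↔ false = true) ∧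
        T.card = k ∧ runsL (n+1) T = r)
      (fun T => Fin.castSucc (Fin.last n) ∈ T)
  unfold pcnt
  rw [hsplit]
  have e1 : (Finset.univ.filter (fun T : Finset (Fin (n+2)) =>
      ((((0:Fin (n+2)) ∈ T) ↔ b0 = true) ∧ ((Fin.last (n+1) ∈ T) ↔ false = true) ∧
        T.card = k ∧ runsL (n+1) T = r) ∧ Fin.castSucc (Fin.last n) ∈ T)).card
      = pcnt b0 true n k r := by
    rw [← bij_false b0 true n k r]
    apply congrArg
    apply Finset.filter_congr
    intro T _
    simp only [Bool.false_eq_true, iff_false, iff_true]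
    tauto
  have e2 : (Finset.univ.filter (fun T : Finset (Fin (n+2)) =>
      ((((0:Fin (n+2)) ∈ T) ↔ b0 = true) ∧ ((Fin.last (n+1) ∈ T) ↔ false = true) ∧
        T.card = k ∧ runsL (n+1) T = r) ∧ ¬ (Fin.castSucc (Fin.last n) ∈ T))).card
      = pcnt b0 false n k r := by
    rw [← bij_false b0 false n k r]
    apply congrArg
    apply Finset.filter_congr
    intro T _
    simp only [Bool.false_eq_true, iff_false]
    tauto
  rw [e1, e2]
  rfl

lemma pcnt_succ_true (b0 : Bool) (n k r : ℕ) :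
    pcnt b0 true (n+1) (k+1) (r+1) = pcnt b0 true n k (r+1) + pcnt b0 false n k r := by
  have hsplit := card_filter_split
      (fun T : Finset (Fin (n+2)) =>
        (((0:Fin (n+2)) ∈ T) ↔ b0 = true) ∧ ((Fin.last (n+1) ∈ T) ↔ true = true) ∧
        T.card = k + 1 ∧ runsL (n+1) T = r + 1)
      (fun T => Fin.castSucc (Fin.last n) ∈ T)
  unfold pcnt
  rw [hsplit]
  have e1 : (Finset.univ.filter (fun T : Finset (Fin (n+2)) =>
      ((((0:Fin (n+2)) ∈ T) ↔ b0 = true) ∧ ((Fin.last (n+1) ∈ T) ↔ true = true) ∧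
        T.card = k + 1 ∧ runsL (n+1) T = r + 1) ∧ Fin.castSucc (Fin.last n) ∈ T)).card
      = pcnt b0 true n k (r+1) := by
    rw [← bij_true b0 true n k (r+1)]
    apply congrArg
    apply Finset.filter_congr
    intro T _
    simp only [iff_true, eq_self_iff_true, if_true, add_zero, true_iff, if_pos]
    tauto
  have e2 : (Finset.univ.filter (fun T : Finset (Fin (n+2)) =>
      ((((0:Fin (n+2)) ∈ T) ↔ b0 = true) ∧ ((Fin.last (n+1) ∈ T) ↔ true = true) ∧
        T.card = k + 1 ∧ runsL (n+1) T = r + 1) ∧ ¬ (Fin.castSucc (Fin.last n) ∈ T))).card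
      = pcnt b0 false n k r := by
    rw [← bij_true b0 false n k r]
    apply congrArg
    apply Finset.filter_congr
    intro T _
    simp only [iff_true, Bool.false_eq_true, iff_false, if_neg, if_false]
    tauto
  rw [e1, e2]
  rfl

noncomputable def acnt (n k r : ℕ) : ℕ :=
  (Finset.univ.filter (fun T : Finset (Fin (n+1)) =>
    T.card = k ∧ runsCount n T = r)).card

lemma acnt_split (n k r : ℕ) :
    acnt n k r = pcnt false false n k r + pcnt false true n k r
      + pcnt true false n k r + pcnt true true n k (r+1) := by
  have h1 := card_filter_split
    (fun T : Finset (Fin (n+1)) => T.card = k ∧ runsCount n T = r)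
    (fun T => (0:Fin (n+1)) ∈ T)
  have h2 := card_filter_split
    (fun T : Finset (Fin (n+1)) => (T.card = k ∧ runsCount n T = r) ∧ (0:Fin (n+1)) ∈ T)
    (fun T => Fin.last n ∈ T)
  have h3 := card_filter_split
    (fun T : Finset (Fin (n+1)) => (T.card = k ∧ runsCount n T = r) ∧ ¬ ((0:Fin (n+1)) ∈ T))
    (fun T => Fin.last n ∈ T)
  have e11 : (Finset.univ.filter (fun T : Finset (Fin (n+1)) =>
      ((T.card = k ∧ runsCount n T = r) ∧ (0:Fin (n+1)) ∈ T) ∧ Fin.last n ∈ T)).card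
      = pcnt true true n k (r+1) := by
    unfold pcnt
    apply congrArg
    apply Finset.filter_congr
    intro T _
    have hrl := runsL_eq_runsCount n T
    by_cases h0 : (0:Fin (n+1)) ∈ T <;> by_cases hl : Fin.last n ∈ T <;>
      simp [h0, hl] at hrl ⊢ <;> omega
  have e10 : (Finset.univ.filter (fun T : Finset (Fin (n+1)) =>
      ((T.card = k ∧ runsCount n T = r) ∧ (0:Fin (n+1)) ∈ T) ∧ ¬ (Fin.last n ∈ T))).card
      = pcnt true false n k r := by
    unfold pcnt
    apply congrArg
    apply Finset.filter_congr
    intro T _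
    have hrl := runsL_eq_runsCount n T
    by_cases h0 : (0:Fin (n+1)) ∈ T <;> by_cases hl : Fin.last n ∈ T <;>
      simp [h0, hl] at hrl ⊢ <;> omega
  have e01 : (Finset.univ.filter (fun T : Finset (Fin (n+1)) =>
      ((T.card = k ∧ runsCount n T = r) ∧ ¬ ((0:Fin (n+1)) ∈ T)) ∧ Fin.last n ∈ T)).card
      = pcnt false true n k r := by
    unfold pcnt
    apply congrArg
    apply Finset.filter_congr
    intro T _
    have hrl := runsL_eq_runsCount n T
    by_cases h0 : (0:Fin (n+1)) ∈ T <;> by_cases hl : Fin.last n ∈ T <;>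
      simp [h0, hl] at hrl ⊢ <;> omega
  have e00 : (Finset.univ.filter (fun T : Finset (Fin (n+1)) =>
      ((T.card = k ∧ runsCount n T = r) ∧ ¬ ((0:Fin (n+1)) ∈ T)) ∧ ¬ (Fin.last n ∈ T))).card
      = pcnt false false n k r := by
    unfold pcnt
    apply congrArg
    apply Finset.filter_congr
    intro T _
    have hrl := runsL_eq_runsCount n T
    by_cases h0 : (0:Fin (n+1)) ∈ T <;> by_cases hl : Fin.last n ∈ T <;>
      simp [h0, hl] at hrl ⊢ <;> omega
  unfold acnt
  rw [h1, h2, h3, e11, e10, e01, e00]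
  omega

lemma coeff_X_shift (s : Fin 3) (f : MvPowerSeries (Fin 3) ℚ) (e : Fin 3 →₀ ℕ) :
    MvPowerSeries.coeff e (MvPowerSeries.X s * f)
      = if 1 ≤ e s then MvPowerSeries.coeff (e - Finsupp.single s 1) f else 0 := by
  rw [MvPowerSeries.X_def, MvPowerSeries.coeff_monomial_mul]
  simp [Finsupp.single_le_iff]

lemma sub_single_apply (e : Fin 3 →₀ ℕ) (s t : Fin 3) :
    (e - Finsupp.single s 1 : Fin 3 →₀ ℕ) t = e t - if s = t then 1 else 0 := by
  rw [Finsupp.tsub_apply, Finsupp.single_apply]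

lemma finsupp_fin3_ext_iff (e d : Fin 3 →₀ ℕ) :
    e = d ↔ e 0 = d 0 ∧ e 1 = d 1 ∧ e 2 = d 2 := by
  constructor
  · rintro rfl; exact ⟨rfl, rfl, rfl⟩
  · rintro ⟨h0, h1, h2⟩
    ext s
    fin_cases s
    exacts [h0, h1, h2]

lemma coeff_X' (s : Fin 3) (e : Fin 3 →₀ ℕ) :
    MvPowerSeries.coeff (R := ℚ) e (MvPowerSeries.X s) = if e = Finsupp.single s 1 then 1 else 0 := by
  rw [MvPowerSeries.coeff_X]

lemma single_apply' (s t : Fin 3) : (Finsupp.single s 1 : Fin 3 →₀ ℕ) t = if s = t then 1 else 0 :=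
  Finsupp.single_apply

lemma X2_cancel (f g : MvPowerSeries (Fin 3) ℚ)
    (h : MvPowerSeries.X 2 * f = MvPowerSeries.X 2 * g) : f = g := by
  apply MvPowerSeries.ext; intro e
  have := congrArg (MvPowerSeries.coeff (Finsupp.single 2 1 + e)) h
  rwa [MvPowerSeries.X_def, MvPowerSeries.coeff_add_monomial_mul,
    MvPowerSeries.coeff_add_monomial_mul, one_mul, one_mul] at this

noncomputable def Pser (b0 bl : Bool) : MvPowerSeries (Fin 3) ℚ := fun e =>
  if 1 ≤ e 0 then (pcnt b0 bl (e 0 - 1) (e 1) (e 2) : ℚ) else 0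

lemma Pser_coeff (b0 bl : Bool) (e : Fin 3 →₀ ℕ) :
    MvPowerSeries.coeff e (Pser b0 bl)
      = if 1 ≤ e 0 then (pcnt b0 bl (e 0 - 1) (e 1) (e 2) : ℚ) else 0 := rfl


noncomputable def Qser : MvPowerSeries (Fin 3) ℚ := fun e =>
  if 1 ≤ e 0 then (pcnt true true (e 0 - 1) (e 1) (e 2 + 1) : ℚ) else 0

lemma Qser_coeff (e : Fin 3 →₀ ℕ) :
    MvPowerSeries.coeff e Qser
      = if 1 ≤ e 0 then (pcnt true true (e 0 - 1) (e 1) (e 2 + 1) : ℚ) else 0 := rfl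

lemma runsGF_coeff (e : Fin 3 →₀ ℕ) :
    MvPowerSeries.coeff e runsGF
      = if 1 ≤ e 0 then (acnt (e 0 - 1) (e 1) (e 2) : ℚ) else 0 := rfl

lemma sub0_0 (e : Fin 3 →₀ ℕ) : (e - Finsupp.single 0 1 : Fin 3 →₀ ℕ) 0 = e 0 - 1 := by
  rw [sub_single_apply, if_pos rfl]
lemma sub0_1 (e : Fin 3 →₀ ℕ) : (e - Finsupp.single 0 1 : Fin 3 →₀ ℕ) 1 = e 1 := by
  rw [sub_single_apply, if_neg (by decide)]; omega
lemma sub0_2 (e : Fin 3 →₀ ℕ) : (e - Finsupp.single 0 1 : Fin 3 →₀ ℕ) 2 = e 2 := by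
  rw [sub_single_apply, if_neg (by decide)]; omega
lemma sub1_0 (e : Fin 3 →₀ ℕ) : (e - Finsupp.single 1 1 : Fin 3 →₀ ℕ) 0 = e 0 := by
  rw [sub_single_apply, if_neg (by decide)]; omega
lemma sub1_1 (e : Fin 3 →₀ ℕ) : (e - Finsupp.single 1 1 : Fin 3 →₀ ℕ) 1 = e 1 - 1 := by
  rw [sub_single_apply, if_pos rfl]
lemma sub1_2 (e : Fin 3 →₀ ℕ) : (e - Finsupp.single 1 1 : Fin 3 →₀ ℕ) 2 = e 2 := by
  rw [sub_single_apply, if_neg (by decide)]; omega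
lemma sub2_0 (e : Fin 3 →₀ ℕ) : (e - Finsupp.single 2 1 : Fin 3 →₀ ℕ) 0 = e 0 := by
  rw [sub_single_apply, if_neg (by decide)]; omega
lemma sub2_1 (e : Fin 3 →₀ ℕ) : (e - Finsupp.single 2 1 : Fin 3 →₀ ℕ) 1 = e 1 := by
  rw [sub_single_apply, if_neg (by decide)]; omega
lemma sub2_2 (e : Fin 3 →₀ ℕ) : (e - Finsupp.single 2 1 : Fin 3 →₀ ℕ) 2 = e 2 - 1 := by
  rw [sub_single_apply, if_pos rfl]

lemma single0_at0 : (Finsupp.single (0:Fin 3) 1 : Fin 3 →₀ ℕ) 0 = 1 := by simp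
lemma single0_at1 : (Finsupp.single (0:Fin 3) 1 : Fin 3 →₀ ℕ) 1 = 0 := by simp
lemma single0_at2 : (Finsupp.single (0:Fin 3) 1 : Fin 3 →₀ ℕ) 2 = 0 := by simp
lemma single2_at0 : (Finsupp.single (2:Fin 3) 1 : Fin 3 →₀ ℕ) 0 = 0 := by simp
lemma single2_at1 : (Finsupp.single (2:Fin 3) 1 : Fin 3 →₀ ℕ) 1 = 0 := by simp
lemma single2_at2 : (Finsupp.single (2:Fin 3) 1 : Fin 3 →₀ ℕ) 2 = 1 := by simp

lemma pcnt_ff_zero (k r : ℕ) : pcnt false false 0 k r = if k = 0 ∧ r = 0 then 1 else 0 := by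
  rw [pcnt_zero]; simp

lemma pcnt_tt_zero (k r : ℕ) : pcnt true true 0 k r = if k = 1 ∧ r = 1 then 1 else 0 := by
  rw [pcnt_zero]; simp

lemma pcnt_ft_zero (k r : ℕ) : pcnt false true 0 k r = 0 := by
  rw [pcnt_zero]; simp

lemma pcnt_tf_zero (k r : ℕ) : pcnt true false 0 k r = 0 := by
  rw [pcnt_zero]; simp

lemma eqA : Pser false false = MvPowerSeries.X 0
    + MvPowerSeries.X 0 * Pser false false + MvPowerSeries.X 0 * Pser false true := by
  apply MvPowerSeries.ext; intro e
  simp only [map_add, coeff_X_shift, coeff_X', Pser_coeff, sub0_0, sub0_1, sub0_2]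
  by_cases hn : 1 ≤ e 0
  case neg =>
    have he : ¬ (e = Finsupp.single 0 1) := by
      rw [finsupp_fin3_ext_iff]
      rw [single0_at0, single0_at1, single0_at2]
      omega
    simp [hn, he]
  case pos =>
  by_cases hm : 1 ≤ e 0 - 1
  case neg =>
    have h1 : e 0 = 1 := by omega
    have he : (e = Finsupp.single 0 1) ↔ (e 1 = 0 ∧ e 2 = 0) := by
      rw [finsupp_fin3_ext_iff]
      rw [single0_at0, single0_at1, single0_at2]
      omega
    rw [if_pos hn, if_pos hn, if_neg hm, if_neg hm, h1, pcnt_ff_zero]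
    by_cases hk : e 1 = 0 <;> by_cases hr : e 2 = 0 <;> simp [he, hk, hr]
  case pos =>
    obtain ⟨m, hm'⟩ : ∃ m, e 0 = m + 2 := ⟨e 0 - 2, by omega⟩
    have he : ¬ (e = Finsupp.single 0 1) := by
      rw [finsupp_fin3_ext_iff]
      rw [single0_at0, single0_at1, single0_at2]
      omega
    rw [if_pos hn, if_pos hn, if_pos hn, if_neg he, if_pos hm, if_pos hm, hm']
    show (pcnt false false (m+1) (e 1) (e 2) : ℚ) = _
    rw [pcnt_succ_false]
    push_cast
    ring

lemma eqB : Pser false true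
    = MvPowerSeries.X 0 * (MvPowerSeries.X 1 * (MvPowerSeries.X 2 * Pser false false))
      + MvPowerSeries.X 0 * (MvPowerSeries.X 1 * Pser false true) := by
  apply MvPowerSeries.ext; intro e
  simp only [map_add, coeff_X_shift, Pser_coeff, sub0_0, sub0_1, sub0_2,
    sub1_0, sub1_1, sub1_2, sub2_0, sub2_1, sub2_2]
  by_cases hn : 1 ≤ e 0
  case neg => simp [hn]
  case pos =>
  by_cases hk : 1 ≤ e 1
  case neg =>
    have hk0 : e 1 = 0 := by omega
    rw [if_pos hn, if_pos hn, if_pos hn, if_neg hk, if_neg hk, hk0, pcnt_true_card_zero]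
    norm_num
  case pos =>
  by_cases hr : 1 ≤ e 2
  case neg =>
    have hr0 : e 2 = 0 := by omega
    rw [if_pos hn, if_pos hn, if_pos hn, if_pos hk, if_pos hk, if_neg hr, hr0,
      pcnt_true_runs_zero]
    by_cases hm : 1 ≤ e 0 - 1
    · rw [if_pos hm, pcnt_true_runs_zero]
      norm_num
    · rw [if_neg hm]
      norm_num
  case pos =>
  by_cases hm : 1 ≤ e 0 - 1
  case neg =>
    have h1 : e 0 = 1 := by omega
    rw [if_pos hn, if_pos hn, if_pos hn, if_pos hk, if_pos hk, if_pos hr,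
      if_neg hm, if_neg hm, h1, pcnt_ft_zero]
    norm_num
  case pos =>
    obtain ⟨m, hm'⟩ : ∃ m, e 0 = m + 2 := ⟨e 0 - 2, by omega⟩
    obtain ⟨k', hk'⟩ : ∃ k', e 1 = k' + 1 := ⟨e 1 - 1, by omega⟩
    obtain ⟨r', hr'⟩ : ∃ r', e 2 = r' + 1 := ⟨e 2 - 1, by omega⟩
    rw [if_pos hn, if_pos hn, if_pos hn, if_pos hk, if_pos hk, if_pos hr,
      if_pos hm, if_pos hm, hm', hk', hr']
    simp only [show m+2-1 = m+1 from rfl, show m+1-1 = m from rfl,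
      show k'+1-1 = k' from rfl, show r'+1-1 = r' from rfl]
    rw [pcnt_succ_true]
    push_cast
    ring

lemma eqC : Pser true false
    = MvPowerSeries.X 0 * Pser true false + MvPowerSeries.X 0 * Pser true true := by
  apply MvPowerSeries.ext; intro e
  simp only [map_add, coeff_X_shift, Pser_coeff, sub0_0, sub0_1, sub0_2]
  by_cases hn : 1 ≤ e 0
  case neg => simp [hn]
  case pos =>
  by_cases hm : 1 ≤ e 0 - 1
  case neg =>
    have h1 : e 0 = 1 := by omega
    rw [if_pos hn, if_pos hn, if_neg hm, if_neg hm, h1, pcnt_tf_zero]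
    norm_num
  case pos =>
    obtain ⟨m, hm'⟩ : ∃ m, e 0 = m + 2 := ⟨e 0 - 2, by omega⟩
    rw [if_pos hn, if_pos hn, if_pos hn, if_pos hm, if_pos hm, hm']
    show (pcnt true false (m+1) (e 1) (e 2) : ℚ) = _
    rw [pcnt_succ_false]
    push_cast
    ring

lemma eqD : Pser true true
    = MvPowerSeries.X 0 * (MvPowerSeries.X 1 * MvPowerSeries.X 2)
      + MvPowerSeries.X 0 * (MvPowerSeries.X 1 * (MvPowerSeries.X 2 * Pser true false))
      + MvPowerSeries.X 0 * (MvPowerSeries.X 1 * Pser true true) := by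
  apply MvPowerSeries.ext; intro e
  simp only [map_add, coeff_X_shift, coeff_X', Pser_coeff, sub0_0, sub0_1, sub0_2,
    sub1_0, sub1_1, sub1_2, sub2_0, sub2_1, sub2_2]
  have hsingle : (e - Finsupp.single 0 1 - Finsupp.single 1 1 : Fin 3 →₀ ℕ)
      = Finsupp.single 2 1 ↔ (e 0 - 1 = 0 ∧ e 1 - 1 = 0 ∧ e 2 = 1) := by
    rw [finsupp_fin3_ext_iff, sub1_0, sub1_1, sub1_2, sub0_0, sub0_1, sub0_2,
      single2_at0, single2_at1, single2_at2]
  by_cases hn : 1 ≤ e 0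
  case neg => simp [hn]
  case pos =>
  by_cases hk : 1 ≤ e 1
  case neg =>
    have hk0 : e 1 = 0 := by omega
    rw [if_pos hn, if_pos hn, if_pos hn, if_pos hn, if_neg hk, if_neg hk, if_neg hk,
      hk0, pcnt_true_card_zero]
    norm_num
  case pos =>
  by_cases hr : 1 ≤ e 2
  case neg =>
    have hr0 : e 2 = 0 := by omega
    have hs : ¬ ((e - Finsupp.single 0 1 - Finsupp.single 1 1 : Fin 3 →₀ ℕ)
        = Finsupp.single 2 1) := by
      rw [hsingle]; omega
    rw [if_pos hn, if_pos hn, if_pos hn, if_pos hn, if_pos hk, if_pos hk, if_pos hk,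
      if_neg hr, if_neg hs, hr0, pcnt_true_runs_zero]
    by_cases hm : 1 ≤ e 0 - 1
    · rw [if_pos hm, pcnt_true_runs_zero]
      norm_num
    · rw [if_neg hm]
      norm_num
  case pos =>
  by_cases hm : 1 ≤ e 0 - 1
  case neg =>
    have h1 : e 0 = 1 := by omega
    have hs : (e - Finsupp.single 0 1 - Finsupp.single 1 1 : Fin 3 →₀ ℕ)
        = Finsupp.single 2 1 ↔ (e 1 = 1 ∧ e 2 = 1) := by
      rw [hsingle]; omega
    rw [if_pos hn, if_pos hn, if_pos hn, if_pos hn, if_pos hk, if_pos hk, if_pos hk,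
      if_pos hr, if_neg hm, if_neg hm, h1, pcnt_tt_zero]
    by_cases h11 : e 1 = 1 <;> by_cases h21 : e 2 = 1 <;> simp [hs, h11, h21]
  case pos =>
    obtain ⟨m, hm'⟩ : ∃ m, e 0 = m + 2 := ⟨e 0 - 2, by omega⟩
    obtain ⟨k', hk'⟩ : ∃ k', e 1 = k' + 1 := ⟨e 1 - 1, by omega⟩
    obtain ⟨r', hr'⟩ : ∃ r', e 2 = r' + 1 := ⟨e 2 - 1, by omega⟩
    have hs : ¬ ((e - Finsupp.single 0 1 - Finsupp.single 1 1 : Fin 3 →₀ ℕ)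
        = Finsupp.single 2 1) := by
      rw [hsingle]; omega
    rw [if_pos hn, if_pos hn, if_pos hn, if_pos hn, if_pos hk, if_pos hk, if_pos hk,
      if_pos hr, if_neg hs, if_pos hm, if_pos hm, hm', hk', hr']
    simp only [show m+2-1 = m+1 from rfl, show m+1-1 = m from rfl,
      show k'+1-1 = k' from rfl, show r'+1-1 = r' from rfl]
    rw [pcnt_succ_true]
    push_cast
    ring

lemma eqE : Pser true true = MvPowerSeries.X 2 * Qser := by
  apply MvPowerSeries.ext; intro e
  simp only [coeff_X_shift, Pser_coeff, Qser_coeff, sub2_0, sub2_1, sub2_2]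
  by_cases hr : 1 ≤ e 2
  · rw [if_pos hr, show e 2 - 1 + 1 = e 2 by omega]
  · rw [if_neg hr]
    have h2 : e 2 = 0 := by omega
    by_cases hn : 1 ≤ e 0
    · rw [if_pos hn, h2, pcnt_true_runs_zero]
      norm_num
    · rw [if_neg hn]

lemma eqF : runsGF = Pser false false + Pser false true + Pser true false + Qser := by
  apply MvPowerSeries.ext; intro e
  rw [map_add, map_add, map_add, runsGF_coeff, Pser_coeff, Pser_coeff, Pser_coeff, Qser_coeff]
  by_cases hn : 1 ≤ e 0
  · rw [if_pos hn, if_pos hn, if_pos hn, if_pos hn, if_pos hn, acnt_split]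
    push_cast
    ring
  · simp [hn]

/-- `R(x,y,z) = (2x²yz + xy(1-x) + x(1-xy)) / ((1-xy)(1-x) - x²yz)`, stated by
multiplying through by the denominator. -/
theorem runsGF_eq :
    runsGF * ((1 - MvPowerSeries.X 0 * MvPowerSeries.X 1) * (1 - MvPowerSeries.X 0)
        - (MvPowerSeries.X 0)^2 * MvPowerSeries.X 1 * MvPowerSeries.X 2) =
      2 * (MvPowerSeries.X 0)^2 * MvPowerSeries.X 1 * MvPowerSeries.X 2
        + MvPowerSeries.X 0 * MvPowerSeries.X 1 * (1 - MvPowerSeries.X 0)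
        + MvPowerSeries.X 0 * (1 - MvPowerSeries.X 0 * MvPowerSeries.X 1) := by
  set x := MvPowerSeries.X (R := ℚ) (0 : Fin 3)
  set y := MvPowerSeries.X (R := ℚ) (1 : Fin 3)
  set z := MvPowerSeries.X (R := ℚ) (2 : Fin 3)
  have hA := eqA
  have hB := eqB
  have hC := eqC
  have hD := eqD
  have hAD : Pser false false * ((1 - x*y)*(1-x) - x^2*y*z) = x*(1-x*y) := by
    linear_combination (1 - x*y) * hA + x * hB
  have hBD : Pser false true * ((1 - x*y)*(1-x) - x^2*y*z) = x^2*y*z := by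
    linear_combination x*y*z * hA + (1 - x) * hB
  have hCD : Pser true false * ((1 - x*y)*(1-x) - x^2*y*z) = x^2*y*z := by
    linear_combination (1 - x*y) * hC + x * hD
  have hDD : Pser true true * ((1 - x*y)*(1-x) - x^2*y*z) = x*y*z*(1-x) := by
    linear_combination x*y*z * hC + (1 - x) * hD
  have hQD : Qser * ((1 - x*y)*(1-x) - x^2*y*z) = x*y*(1-x) := by
    apply X2_cancel
    linear_combination hDD - ((1 - x*y)*(1-x) - x^2*y*z) * eqE
  linear_combination ((1 - x*y)*(1-x) - x^2*y*z) * eqF + hAD + hBD + hCD + hQD
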